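/- Let n be a positive integer, let H be an n×n Hermitian complex matrix with an orthonormal eigenbasis (ψ_j)_{j=1}^n and corresponding real eigenvalues λ_j, and let ψ = Σ_j a_j ψ_j ∈ ℂⁿ. Then, as T → ∞, the matrix-valued average (1/T)·∫₀ᵀ exp(−iHt)·(ψψ†)·exp(iHt) dt converges to Σ_{(j,k): λ_j = λ_k} a_j·conj(a_k)·ψ_j(ψ_k)†. In particular, if the eigenvalues λ_j are pairwise distinct, the limit equals Σ_j |a_j|²·ψ_j(ψ_j)†. -/

import Mathlib

open scoped Matrix.Norms.L2Operator
open NormedSpace Matrix Finset Filter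

lemma mulVec_exp_eig {n : ℕ} (M : Matrix (Fin n) (Fin n) ℂ) (x : Fin n → ℂ) (μ : ℂ)
    (h : M.mulVec x = μ • x) :
    (exp M).mulVec x = Complex.exp μ • x := by
  have hpow : ∀ k : ℕ, (M ^ k).mulVec x = (μ ^ k) • x := by
    intro k
    induction k with
    | zero => simp
    | succ k ih =>
      rw [pow_succ', pow_succ', ← Matrix.mulVec_mulVec, ih, Matrix.mulVec_smul, h,
        smul_smul, mul_comm]
  let L : Matrix (Fin n) (Fin n) ℂ →ₗ[ℂ] (Fin n → ℂ) :=
    { toFun := fun A => A.mulVec x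
      map_add' := fun A B => Matrix.add_mulVec A B x
      map_smul' := fun c A => Matrix.smul_mulVec c A x }
  let Lc : Matrix (Fin n) (Fin n) ℂ →L[ℂ] (Fin n → ℂ) :=
    { L with cont := L.continuous_of_finiteDimensional }
  have key : Lc (exp M) = Complex.exp μ • x := by
    rw [exp_eq_tsum ℂ, Lc.map_tsum (expSeries_summable' (𝕂 := ℂ) M)]
    have : ∀ k : ℕ, Lc ((k.factorial : ℂ)⁻¹ • M ^ k)
        = ((k.factorial : ℂ)⁻¹ * μ ^ k) • x := by
      intro k
      rw [_root_.map_smul]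
      show (k.factorial : ℂ)⁻¹ • (M ^ k).mulVec x = _
      rw [hpow, smul_smul]
    rw [tsum_congr this, Summable.tsum_smul_const ?_]
    · congr 1
      rw [Complex.exp_eq_exp_ℂ, exp_eq_tsum ℂ]
      exact (tsum_congr fun k => by rw [smul_eq_mul]).symm
    · have := expSeries_summable' (𝕂 := ℂ) μ
      simpa [smul_eq_mul] using this
  exact key

lemma avg_exp_tendsto (μ : ℝ) :
    Tendsto (fun T : ℝ => (1/(T:ℂ)) * ∫ t in (0:ℝ)..T, Complex.exp (Complex.I * μ * t))
      atTop (nhds (if μ = 0 then 1 else 0)) := by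
  rcases eq_or_ne μ 0 with h | h
  · rw [if_pos h]
    subst h
    have hcon : ∀ᶠ T : ℝ in atTop, (1/(T:ℂ)) * (∫ t in (0:ℝ)..T,
        Complex.exp (Complex.I * (0:ℝ) * t)) = 1 := by
      filter_upwards [eventually_ge_atTop (1:ℝ)] with T hT
      have hT0 : (T:ℂ) ≠ 0 := by
        exact_mod_cast ne_of_gt (lt_of_lt_of_le one_pos hT)
      simp only [Complex.ofReal_zero, mul_zero, zero_mul, Complex.exp_zero]
      rw [intervalIntegral.integral_const]
      simp only [sub_zero, smul_eq_mul, mul_one]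
      rw [Complex.real_smul]
      field_simp
    exact Tendsto.congr' (hcon.mono fun T h => h.symm) tendsto_const_nhds
  · rw [if_neg h]
    have hc : Complex.I * μ ≠ 0 := by
      simp [Complex.I_ne_zero, Complex.ofReal_ne_zero, h]
    have hrepr : ∀ T : ℝ, (∫ t in (0:ℝ)..T, Complex.exp (Complex.I * μ * t))
        = (Complex.exp (Complex.I * μ * T) - 1) / (Complex.I * μ) := by
      intro T
      rw [integral_exp_mul_complex hc]
      simp
    apply squeeze_zero_norm' (a := fun T : ℝ => T⁻¹ * (2 / |μ|))
    · filter_upwards [eventually_ge_atTop (1:ℝ)] with T hT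
      have hT0 : (0:ℝ) < T := lt_of_lt_of_le one_pos hT
      rw [hrepr, norm_mul]
      have h1 : ‖(1/(T:ℂ))‖ = T⁻¹ := by
        rw [norm_div, norm_one, Complex.norm_real, Real.norm_of_nonneg hT0.le, one_div]
      have h2 : ‖Complex.exp (Complex.I * μ * T) - 1‖ ≤ 2 := by
        calc ‖Complex.exp (Complex.I * μ * T) - 1‖
            ≤ ‖Complex.exp (Complex.I * μ * T)‖ + ‖(1:ℂ)‖ := norm_sub_le _ _
          _ ≤ 2 := by
              rw [norm_one, Complex.norm_exp]
              simp [Complex.mul_re]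
              norm_num
      have h3 : ‖Complex.I * (μ:ℂ)‖ = |μ| := by
        rw [norm_mul, Complex.norm_I, one_mul, Complex.norm_real, Real.norm_eq_abs]
      rw [h1, norm_div, h3]
      have : ‖Complex.exp (Complex.I * ↑μ * ↑T) - 1‖ / |μ| ≤ 2 / |μ| :=
        div_le_div_of_nonneg_right ?_ ?_ |>.trans_eq rfl
      · exact mul_le_mul_of_nonneg_left this (inv_nonneg.mpr hT0.le)
      · exact h2
      · exact (abs_pos.mpr h).le
    · have : Tendsto (fun T : ℝ => T⁻¹) atTop (nhds 0) := tendsto_inv_atTop_zero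
      simpa using this.mul_const (2 / |μ|)

lemma mul_vecMulVec' {n : ℕ} (A : Matrix (Fin n) (Fin n) ℂ) (x y : Fin n → ℂ) :
    A * vecMulVec x y = vecMulVec (A.mulVec x) y := by
  ext i j
  simp [Matrix.mul_apply, vecMulVec_apply, Matrix.mulVec, dotProduct, Finset.sum_mul,
    mul_assoc]

lemma vecMulVec_mul' {n : ℕ} (B : Matrix (Fin n) (Fin n) ℂ) (x y : Fin n → ℂ) :
    vecMulVec x y * B = vecMulVec x (Matrix.vecMul y B) := by
  ext i j
  simp [Matrix.mul_apply, vecMulVec_apply, Matrix.vecMul, dotProduct, Finset.mul_sum,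
    mul_assoc]

lemma vecMulVec_sum_sum {n : ℕ} (c d : Fin n → ℂ) (x y : Fin n → (Fin n → ℂ)) :
    vecMulVec (∑ j, c j • x j) (∑ k, d k • y k)
      = ∑ j, ∑ k, (c j * d k) • vecMulVec (x j) (y k) := by
  ext p q
  simp only [vecMulVec_apply, Finset.sum_apply, Pi.smul_apply, smul_eq_mul,
    Matrix.sum_apply, Matrix.smul_apply]
  rw [Finset.sum_mul_sum]
  exact Finset.sum_congr rfl fun j _ => Finset.sum_congr rfl fun k _ => by ring

theorem dephasing_time_average (n : ℕ) (hn : 0 < n)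
    (H : Matrix (Fin n) (Fin n) ℂ) (hH : H.IsHermitian)
    (lam : Fin n → ℝ) (ψ : Fin n → (Fin n → ℂ))
    (hon : ∀ j k, star (ψ j) ⬝ᵥ ψ k = if j = k then 1 else 0)
    (heig : ∀ j, H.mulVec (ψ j) = (Complex.ofReal (lam j)) • ψ j)
    (a : Fin n → ℂ) (v : Fin n → ℂ) (hv : v = ∑ j, a j • ψ j) :
    Tendsto (fun T : ℝ => (1 / T) •
        ∫ t in (0:ℝ)..T, exp ((-(Complex.I * t)) • H) *
          Matrix.vecMulVec v (star v) * exp ((Complex.I * t) • H))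
      atTop
      (nhds (∑ j, ∑ k, if lam j = lam k then
        (a j * starRingEnd ℂ (a k)) • Matrix.vecMulVec (ψ j) (star (ψ k)) else 0)) ∧
    (Function.Injective lam →
      Tendsto (fun T : ℝ => (1 / T) •
          ∫ t in (0:ℝ)..T, exp ((-(Complex.I * t)) • H) *
            Matrix.vecMulVec v (star v) * exp ((Complex.I * t) • H))
        atTop
        (nhds (∑ j, Complex.ofReal (‖a j‖ ^ 2) •
          Matrix.vecMulVec (ψ j) (star (ψ j))))) := by
  have hexp : ∀ (z : ℂ) (j : Fin n),
      (exp (z • H)).mulVec (ψ j) = Complex.exp (z * lam j) • ψ j := by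
    intro z j
    apply mulVec_exp_eig
    rw [Matrix.smul_mulVec, heig, smul_smul]
  have hw : ∀ t : ℝ, (exp ((-(Complex.I * t)) • H)).mulVec v
      = ∑ j, (a j * Complex.exp (-(Complex.I * t) * lam j)) • ψ j := by
    intro t
    rw [hv]
    have hs := map_sum (Matrix.mulVecLin (exp ((-(Complex.I * t)) • H)))
      (fun j => a j • ψ j) univ
    simp only [Matrix.mulVecLin_apply] at hs
    rw [hs]
    refine Finset.sum_congr rfl fun j _ => ?_
    rw [Matrix.mulVec_smul, hexp, smul_smul]
  have hct : ∀ t : ℝ, exp ((Complex.I * t) • H)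
      = (exp ((-(Complex.I * t)) • H))ᴴ := by
    intro t
    rw [← Matrix.exp_conjTranspose]
    congr 1
    rw [Matrix.conjTranspose_smul, hH.eq]
    congr 1
    simp
  have hintegrand : ∀ t : ℝ,
      exp ((-(Complex.I * t)) • H) * Matrix.vecMulVec v (star v)
          * exp ((Complex.I * t) • H)
        = ∑ j, ∑ k, ((a j * starRingEnd ℂ (a k))
            * Complex.exp (Complex.I * (((lam k - lam j : ℝ)) : ℂ) * t))
            • Matrix.vecMulVec (ψ j) (star (ψ k)) := by
    intro t
    rw [mul_vecMulVec', vecMulVec_mul', hct t, ← Matrix.star_mulVec, hw t]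
    have hstar : star (∑ j, (a j * Complex.exp (-(Complex.I * t) * lam j)) • ψ j)
        = ∑ k, (starRingEnd ℂ (a k * Complex.exp (-(Complex.I * t) * lam k)))
            • star (ψ k) := by
      rw [star_sum]
      exact Finset.sum_congr rfl fun k _ => by rw [star_smul]; rfl
    rw [hstar, vecMulVec_sum_sum]
    refine Finset.sum_congr rfl fun j _ => Finset.sum_congr rfl fun k _ => ?_
    congr 1
    rw [_root_.map_mul]
    have hconj : starRingEnd ℂ (Complex.exp (-(Complex.I * t) * lam k))
        = Complex.exp (Complex.I * t * lam k) := by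
      rw [← Complex.exp_conj]
      congr 1
      rw [_root_.map_mul, Complex.conj_ofReal, map_neg, _root_.map_mul, Complex.conj_I,
        Complex.conj_ofReal]
      ring
    rw [hconj]
    have hmul : Complex.exp (-(Complex.I * t) * lam j) * Complex.exp (Complex.I * t * lam k)
        = Complex.exp (Complex.I * (((lam k - lam j : ℝ)) : ℂ) * t) := by
      rw [← Complex.exp_add]
      congr 1
      push_cast
      ring
    linear_combination (a j * starRingEnd ℂ (a k)) * hmul
  have hcont : ∀ (z : ℂ) (μ : ℝ) (B : Matrix (Fin n) (Fin n) ℂ),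
      Continuous (fun t : ℝ => (z * Complex.exp (Complex.I * μ * t)) • B) :=
    fun z μ B => (continuous_const.mul (Complex.continuous_exp.comp
      (continuous_const.mul Complex.continuous_ofReal))).smul continuous_const
  have hInt : ∀ T : ℝ,
      (∫ t in (0:ℝ)..T, exp ((-(Complex.I * t)) • H) * Matrix.vecMulVec v (star v)
          * exp ((Complex.I * t) • H))
        = ∑ j, ∑ k, ((a j * starRingEnd ℂ (a k))
            * ∫ t in (0:ℝ)..T, Complex.exp (Complex.I * (((lam k - lam j : ℝ)) : ℂ) * t))
            • Matrix.vecMulVec (ψ j) (star (ψ k)) := by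
    intro T
    simp only [hintegrand]
    rw [intervalIntegral.integral_finset_sum (fun j _ =>
      ((continuous_finset_sum _ fun k _ => hcont _ _ _).intervalIntegrable _ _))]
    refine Finset.sum_congr rfl fun j _ => ?_
    rw [intervalIntegral.integral_finset_sum (fun k _ =>
      ((hcont _ _ _).intervalIntegrable _ _))]
    refine Finset.sum_congr rfl fun k _ => ?_
    rw [intervalIntegral.integral_smul_const, intervalIntegral.integral_const_mul]
  have hF : ∀ T : ℝ,
      ((1 / T) • ∫ t in (0:ℝ)..T, exp ((-(Complex.I * t)) • H)
          * Matrix.vecMulVec v (star v) * exp ((Complex.I * t) • H))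
        = ∑ j, ∑ k, ((a j * starRingEnd ℂ (a k))
            * ((1/(T:ℂ)) * ∫ t in (0:ℝ)..T,
                Complex.exp (Complex.I * (((lam k - lam j : ℝ)) : ℂ) * t)))
            • Matrix.vecMulVec (ψ j) (star (ψ k)) := by
    intro T
    rw [hInt, Finset.smul_sum]
    refine Finset.sum_congr rfl fun j _ => ?_
    rw [Finset.smul_sum]
    refine Finset.sum_congr rfl fun k _ => ?_
    rw [← algebraMap_smul ℂ (1/T : ℝ), smul_smul]
    congr 1
    rw [Complex.coe_algebraMap]
    push_cast
    ring
  have key : Tendsto (fun T : ℝ => (1 / T) •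
        ∫ t in (0:ℝ)..T, exp ((-(Complex.I * t)) • H) *
          Matrix.vecMulVec v (star v) * exp ((Complex.I * t) • H))
      atTop
      (nhds (∑ j, ∑ k, if lam j = lam k then
        (a j * starRingEnd ℂ (a k)) • Matrix.vecMulVec (ψ j) (star (ψ k)) else 0)) := by
    have main : Tendsto (fun T : ℝ => ∑ j, ∑ k, ((a j * starRingEnd ℂ (a k))
            * ((1/(T:ℂ)) * ∫ t in (0:ℝ)..T,
                Complex.exp (Complex.I * (((lam k - lam j : ℝ)) : ℂ) * t)))
            • Matrix.vecMulVec (ψ j) (star (ψ k)))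
        atTop
        (nhds (∑ j, ∑ k, if lam j = lam k then
          (a j * starRingEnd ℂ (a k)) • Matrix.vecMulVec (ψ j) (star (ψ k)) else 0)) := by
      refine tendsto_finset_sum _ fun j _ => tendsto_finset_sum _ fun k _ => ?_
      have h := avg_exp_tendsto (lam k - lam j)
      have h2 := ((tendsto_const_nhds (x := a j * starRingEnd ℂ (a k))).mul h).smul_const
        (Matrix.vecMulVec (ψ j) (star (ψ k)))
      have heq : ((a j * starRingEnd ℂ (a k))
            * (if ((lam k - lam j : ℝ)) = 0 then (1:ℂ) else 0))
            • Matrix.vecMulVec (ψ j) (star (ψ k))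
          = if lam j = lam k then
            (a j * starRingEnd ℂ (a k)) • Matrix.vecMulVec (ψ j) (star (ψ k)) else 0 := by
        by_cases hjk : lam j = lam k
        · rw [if_pos hjk, if_pos (by rw [hjk]; ring), mul_one]
        · rw [if_neg (fun h0 => hjk (by linarith [sub_eq_zero.mp h0])), if_neg hjk,
            mul_zero, zero_smul]
      rw [← heq]
      exact h2
    exact main.congr (fun T => (hF T).symm)
  refine ⟨key, fun hinj => ?_⟩
  have hS : (∑ j, ∑ k, if lam j = lam k then
        (a j * starRingEnd ℂ (a k)) • Matrix.vecMulVec (ψ j) (star (ψ k)) else 0)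
      = ∑ j, Complex.ofReal (‖a j‖ ^ 2) • Matrix.vecMulVec (ψ j) (star (ψ j)) := by
    refine Finset.sum_congr rfl fun j _ => ?_
    have : ∀ k : Fin n, (if lam j = lam k then
        (a j * starRingEnd ℂ (a k)) • Matrix.vecMulVec (ψ j) (star (ψ k)) else 0)
        = (if j = k then
        (a j * starRingEnd ℂ (a k)) • Matrix.vecMulVec (ψ j) (star (ψ k)) else 0) := by
      intro k
      congr 1
      exact propext ⟨fun h => hinj h, fun h => by rw [h]⟩
    rw [Finset.sum_congr rfl fun k _ => this k, Finset.sum_ite_eq]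
    simp only [Finset.mem_univ, if_pos]
    congr 1
    rw [Complex.mul_conj]
    norm_cast
    rw [Complex.normSq_eq_norm_sq]
  rw [hS] at key
  exact key
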